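/- arXiv:2408.11901 — 3 statements merged into one kernel-verified Lean document; each statement's English description precedes it below -/
import Mathlib

section
/- Let W be a (p+1)×(p+1) real Wishart matrix with r degrees of freedom with Bartlett decomposition W = L Lᵀ, where L is lower triangular with independent entries: diagonal entries L_{ii} chi-distributed with r−i degrees of freedom (0-indexed, r > p), and strictly lower entries standard Gaussian. Let L̃ be L with its first column removed and W̃ = L̃ L̃ᵀ. Then for every t ≥ 0, P[ r^{−1/2}·max_{1≤i,j≤p} |W_{ij} − W̃_{ij}| ≥ t² + √2·r^{−1/4}·t + r^{−1/2} ] ≤ p·exp(−(√r/2)·t²). -/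
open MeasureTheory ProbabilityTheory Matrix

open Real Set

lemma gauss_half : gaussianReal 0 1 (Set.Ici (0:ℝ)) = ENNReal.ofReal (1/2) := by
  rw [gaussianReal_apply_eq_integral 0 one_ne_zero]
  congr 1
  rw [integral_Ici_eq_integral_Ioi]
  simp only [gaussianPDFReal, NNReal.coe_one, mul_one, sub_zero]
  rw [integral_const_mul]
  have h : ∀ x : ℝ, Real.exp (-x^2 / 2) = Real.exp (-(1/2) * x^2) := by
    intro x; ring_nf
  simp_rw [h, integral_gaussian_Ioi]
  have : π / (1/2) = 2 * π := by ring
  rw [this, inv_mul_eq_div, div_div, div_eq_iff (by positivity)]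
  ring

lemma gauss_tail (s : ℝ) (hs : 0 ≤ s) :
    gaussianReal 0 1 (Set.Ici s) ≤ ENNReal.ofReal (Real.exp (-s^2/2) / 2) := by
  rw [gaussianReal_apply_eq_integral 0 one_ne_zero]
  apply ENNReal.ofReal_le_ofReal
  have h1 : ∫ x in Ici s, gaussianPDFReal 0 1 x ≤
      ∫ x in Ici s, Real.exp (-s^2/2) * gaussianPDFReal s 1 x := by
    apply setIntegral_mono_on
    · exact (integrable_gaussianPDFReal 0 1).restrict
    · exact ((integrable_gaussianPDFReal s 1).const_mul _).restrict
    · exact measurableSet_Ici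
    · intro x hx
      simp only [gaussianPDFReal, NNReal.coe_one, mul_one, sub_zero]
      rw [mul_comm (rexp _), mul_assoc, ← Real.exp_add]
      apply mul_le_mul_of_nonneg_left _ (by positivity)
      apply Real.exp_le_exp.mpr
      have hsx : s ≤ x := hx
      nlinarith
  have h2 : ∫ x in Ici s, gaussianPDFReal s 1 x = 1/2 := by
    have e1 : ENNReal.ofReal (∫ x in Ici s, gaussianPDFReal s 1 x) = gaussianReal s 1 (Ici s) :=
      (gaussianReal_apply_eq_integral s one_ne_zero _).symm
    have e2 : gaussianReal s 1 (Ici s) = gaussianReal 0 1 (Ici 0) := by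
      have hm := gaussianReal_map_add_const (μ := 0) (v := 1) s
      rw [zero_add] at hm
      rw [← hm, Measure.map_apply (measurable_add_const s) measurableSet_Ici]
      congr 1
      ext x
      simp [le_add_iff_nonneg_left]
    rw [e2, gauss_half] at e1
    have hnn : 0 ≤ ∫ x in Ici s, gaussianPDFReal s 1 x :=
      integral_nonneg fun x => gaussianPDFReal_nonneg _ _ _
    exact (ENNReal.ofReal_eq_ofReal_iff hnn (by norm_num)).mp e1
  calc ∫ x in Ici s, gaussianPDFReal 0 1 x ≤ _ := h1
    _ = Real.exp (-s^2/2) * (1/2) := by rw [integral_const_mul, h2]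
    _ = Real.exp (-s^2/2) / 2 := by ring

lemma gauss_map_neg : (gaussianReal 0 1).map (fun x : ℝ => -x) = gaussianReal 0 1 := by
  have h := gaussianReal_map_const_mul (μ := 0) (v := 1) (-1)
  simp only [neg_one_mul, mul_zero, neg_zero] at h
  have hv : (⟨(-1:ℝ)^2, sq_nonneg _⟩ : NNReal) * 1 = 1 := by
    ext; norm_num
  convert h using 2
  ext; simp

lemma gauss_tail_abs (s : ℝ) (hs : 0 ≤ s) :
    gaussianReal 0 1 {x : ℝ | s ≤ |x|} ≤ ENNReal.ofReal (Real.exp (-s^2/2)) := by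
  have hset : {x : ℝ | s ≤ |x|} ⊆ Iic (-s) ∪ Ici s := by
    intro x hx
    rcases abs_cases x with ⟨h, _⟩ | ⟨h, _⟩
    · right; exact mem_Ici.mpr (h ▸ hx)
    · left; simp only [mem_Iic]; linarith [hx.trans_eq h]
  have hneg : gaussianReal 0 1 (Iic (-s)) ≤ ENNReal.ofReal (Real.exp (-s^2/2) / 2) := by
    have : gaussianReal 0 1 (Iic (-s)) = gaussianReal 0 1 (Ici s) := by
      conv_lhs => rw [← gauss_map_neg]
      rw [Measure.map_apply measurable_neg measurableSet_Iic]
      congr 1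
      ext x
      simp [neg_le_neg_iff, le_abs]
    rw [this]; exact gauss_tail s hs
  calc gaussianReal 0 1 {x : ℝ | s ≤ |x|} ≤ gaussianReal 0 1 (Iic (-s) ∪ Ici s) :=
        measure_mono hset
    _ ≤ gaussianReal 0 1 (Iic (-s)) + gaussianReal 0 1 (Ici s) := measure_union_le _ _
    _ ≤ ENNReal.ofReal (Real.exp (-s^2/2) / 2) + ENNReal.ofReal (Real.exp (-s^2/2) / 2) :=
        add_le_add hneg (gauss_tail s hs)
    _ = ENNReal.ofReal (Real.exp (-s^2/2)) := by
        rw [← ENNReal.ofReal_add (by positivity) (by positivity)]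
        ring_nf


/-- Robustness of the Bartlett decomposition. `W = L Lᵀ` is a
`(p+1)×(p+1)` real Wishart matrix with `r > p` degrees of freedom: `L` is lower
triangular with independent entries, diagonal entries chi-distributed with `r − i`
degrees of freedom (so their square is chi-squared, i.e. Gamma with shape `(r−i)/2`
and rate `1/2`), strictly lower entries standard Gaussian. `W̃ = L̃ L̃ᵀ` with the
first column of `L` removed, so `W i j − W̃ i j = L i 0 · L j 0`. Then for `t ≥ 0`,
`P[r^{−1/2} max_{1≤i,j≤p} |W_{ij} − W̃_{ij}| ≥ t² + √2 r^{−1/4} t + r^{−1/2}]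
  ≤ p·exp(−(√r/2)t²)`. -/
theorem stmt6 {Ω : Type*} [MeasurableSpace Ω] (P : Measure Ω) [IsProbabilityMeasure P]
    (p r : ℕ) (hrp : p < r)
    (L : Ω → Matrix (Fin (p + 1)) (Fin (p + 1)) ℝ)
    (hmeas : ∀ i j, Measurable fun ω => L ω i j)
    (hlow : ∀ ω (i j : Fin (p + 1)), i < j → L ω i j = 0)
    (hindep : iIndepFun
      (fun (q : {q : Fin (p + 1) × Fin (p + 1) // q.2 ≤ q.1}) ω => L ω q.1.1 q.1.2) P)
    (hgauss : ∀ i j : Fin (p + 1), j < i →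
      P.map (fun ω => L ω i j) = gaussianReal 0 1)
    (hdiagnn : ∀ (i : Fin (p + 1)) ω, 0 ≤ L ω i i)
    (hchi : ∀ i : Fin (p + 1),
      P.map (fun ω => (L ω i i) ^ 2) = gammaMeasure (((r : ℝ) - (i : ℕ)) / 2) (1 / 2))
    (W Wt : Ω → Matrix (Fin (p + 1)) (Fin (p + 1)) ℝ)
    (hW : ∀ ω, W ω = L ω * (L ω)ᵀ)
    (hWt : ∀ ω (i j : Fin (p + 1)), Wt ω i j = W ω i j - L ω i 0 * L ω j 0)
    (t : ℝ) (ht : 0 ≤ t) :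
    P {ω | ∃ i j : Fin p,
        t ^ 2 + Real.sqrt 2 * (r : ℝ) ^ (-(1 : ℝ) / 4) * t + (r : ℝ) ^ (-(1 : ℝ) / 2) ≤
          (r : ℝ) ^ (-(1 : ℝ) / 2) * |W ω i.succ j.succ - Wt ω i.succ j.succ|} ≤
      ENNReal.ofReal (p * Real.exp (-(Real.sqrt r / 2) * t ^ 2)) := by
  set rr : ℝ := (r : ℝ) with hrr
  have hr1 : (1 : ℝ) ≤ rr := by
    rw [hrr]
    exact_mod_cast Nat.one_le_iff_ne_zero.mpr (by omega)
  have rpos : (0 : ℝ) < rr := by linarith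
  set s0 : ℝ := rr ^ ((1:ℝ)/4) * t + Real.sqrt 2 / 2 with hs0def
  have hs0 : 0 ≤ s0 := by positivity
  -- rpow arithmetic
  have h12 : rr ^ ((1:ℝ)/2) * rr ^ (-(1:ℝ)/2) = 1 := by
    rw [← Real.rpow_add rpos]; norm_num
  have h14 : rr ^ ((1:ℝ)/2) * rr ^ (-(1:ℝ)/4) = rr ^ ((1:ℝ)/4) := by
    rw [← Real.rpow_add rpos]; norm_num
  have h44 : rr ^ ((1:ℝ)/4) * rr ^ ((1:ℝ)/4) = rr ^ ((1:ℝ)/2) := by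
    rw [← Real.rpow_add rpos]; norm_num
  have hsqrt2 : Real.sqrt 2 ^ 2 = 2 := Real.sq_sqrt (by norm_num)
  have hsqrtr : Real.sqrt rr = rr ^ ((1:ℝ)/2) := Real.sqrt_eq_rpow rr
  have hs0sq : s0 ^ 2 = rr ^ ((1:ℝ)/2) * t^2 + Real.sqrt 2 * rr ^ ((1:ℝ)/4) * t + 1/2 := by
    rw [hs0def]; ring_nf; nlinarith [hsqrt2, h44]
  -- inclusion into a union
  have hincl : {ω | ∃ i j : Fin p,
        t ^ 2 + Real.sqrt 2 * rr ^ (-(1 : ℝ) / 4) * t + rr ^ (-(1 : ℝ) / 2) ≤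
          rr ^ (-(1 : ℝ) / 2) * |W ω i.succ j.succ - Wt ω i.succ j.succ|} ⊆
      ⋃ i : Fin p, {ω | s0 ≤ |L ω i.succ 0|} := by
    rintro ω ⟨i, j, hij⟩
    have hdiff : W ω i.succ j.succ - Wt ω i.succ j.succ = L ω i.succ 0 * L ω j.succ 0 := by
      rw [hWt ω i.succ j.succ]; ring
    rw [hdiff] at hij
    set a := |L ω i.succ 0|
    set b := |L ω j.succ 0|
    have hab : |L ω i.succ 0 * L ω j.succ 0| = a * b := abs_mul _ _
    rw [hab] at hij
    have hm : a * b ≤ max a b ^ 2 := by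
      have ha : 0 ≤ a := abs_nonneg _
      have hb : 0 ≤ b := abs_nonneg _
      calc a * b ≤ max a b * max a b :=
            mul_le_mul (le_max_left a b) (le_max_right a b) hb (le_trans ha (le_max_left a b))
        _ = max a b ^ 2 := (sq (max a b)).symm
    -- multiply hij by rr^{1/2}
    have hpos : (0:ℝ) < rr ^ ((1:ℝ)/2) := Real.rpow_pos_of_pos rpos _
    have hij2 : rr ^ ((1:ℝ)/2) * t^2 + Real.sqrt 2 * rr ^ ((1:ℝ)/4) * t + 1 ≤ a * b := by
      have := mul_le_mul_of_nonneg_left hij hpos.le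
      calc rr ^ ((1:ℝ)/2) * t^2 + Real.sqrt 2 * rr ^ ((1:ℝ)/4) * t + 1
          = rr ^ ((1:ℝ)/2) * (t ^ 2 + Real.sqrt 2 * rr ^ (-(1 : ℝ) / 4) * t + rr ^ (-(1 : ℝ) / 2)) := by
            linear_combination (-(Real.sqrt 2) * t) * h14 - h12
        _ ≤ rr ^ ((1:ℝ)/2) * (rr ^ (-(1 : ℝ) / 2) * (a * b)) := this
        _ = (rr ^ ((1:ℝ)/2) * rr ^ (-(1:ℝ)/2)) * (a * b) := by ring
        _ = a * b := by rw [h12]; ring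
    have hs0m : s0 ^ 2 ≤ max a b ^ 2 := by
      rw [hs0sq]; linarith [hij2, hm]
    have hmb : 0 ≤ max a b := le_trans (abs_nonneg _) (le_max_left a b)
    have hmax : s0 ≤ max a b := by
      calc s0 = Real.sqrt (s0 ^ 2) := (Real.sqrt_sq hs0).symm
        _ ≤ Real.sqrt (max a b ^ 2) := Real.sqrt_le_sqrt hs0m
        _ = max a b := Real.sqrt_sq hmb
    rcases le_max_iff.mp hmax with h | h
    · exact Set.mem_iUnion.mpr ⟨i, h⟩
    · exact Set.mem_iUnion.mpr ⟨j, h⟩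
  refine le_trans (measure_mono hincl) ?_
  refine le_trans (measure_iUnion_le _) ?_
  have hterm : ∀ i : Fin p, P {ω | s0 ≤ |L ω i.succ 0|} ≤
      ENNReal.ofReal (Real.exp (-(Real.sqrt rr / 2) * t ^ 2)) := by
    intro i
    have hms : MeasurableSet {x : ℝ | s0 ≤ |x|} :=
      (isClosed_le continuous_const continuous_abs).measurableSet
    have : P {ω | s0 ≤ |L ω i.succ 0|} = gaussianReal 0 1 {x : ℝ | s0 ≤ |x|} := by
      rw [← hgauss i.succ 0 (Fin.succ_pos i),
        Measure.map_apply (hmeas i.succ 0) hms]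
      rfl
    rw [this]
    refine le_trans (gauss_tail_abs s0 hs0) (ENNReal.ofReal_le_ofReal ?_)
    apply Real.exp_le_exp.mpr
    rw [hsqrtr, hs0sq]
    nlinarith [Real.rpow_nonneg rpos.le ((1:ℝ)/4), Real.sqrt_nonneg (2:ℝ), ht,
      mul_nonneg (mul_nonneg (Real.sqrt_nonneg (2:ℝ)) (Real.rpow_nonneg rpos.le ((1:ℝ)/4))) ht]
  refine le_trans (ENNReal.tsum_le_tsum hterm) ?_
  rw [tsum_fintype]
  simp only [Finset.sum_const, Finset.card_univ, Fintype.card_fin, nsmul_eq_mul]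
  rw [ENNReal.ofReal_mul (by positivity), ENNReal.ofReal_natCast]
end

section
/- Let p, q be probability measures on ℝ^d with characteristic functions φ, γ. Suppose every mixed moment of order k ≤ t of p differs from the corresponding moment of q by at most ε > 0 in absolute value, and all mixed moments of both distributions of order k > t are bounded in absolute value by (C√k)^k for some C ≥ 0. Then for all u ∈ ℝ^d with ‖u‖₁ ≤ √(t+1)/(2eC), |φ(u) − γ(u)| ≤ ε·exp(‖u‖₁) + 2^{1−t}. -/
open MeasureTheory Finset
open scoped Nat

private lemma pow_self_le_exp_mul_factorial (n : ℕ) :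
    (n : ℝ) ^ n ≤ Real.exp 1 ^ n * n ! := by
  have h2 : (0:ℝ) < n ! := by positivity
  have h1 : (n : ℝ) ^ n / n ! ≤ Real.exp n := by
    refine le_trans ?_ (Real.sum_le_exp_of_nonneg (Nat.cast_nonneg n) (n + 1))
    refine Finset.single_le_sum (f := fun i => (n:ℝ)^i / i !) (fun i _ => by positivity) ?_
    simp
  rw [div_le_iff₀ h2] at h1
  rw [Real.exp_one_pow]
  exact h1

private lemma inv_factorial_le (n : ℕ) (hn : 1 ≤ n) :
    (1:ℝ) / n ! ≤ (Real.exp 1 / n) ^ n := by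
  have hnp : (0:ℝ) < n := by exact_mod_cast hn
  have h2 : (0:ℝ) < n ! := by positivity
  rw [div_pow, div_le_div_iff₀ h2 (by positivity)]
  calc (1:ℝ) * n ^ n = (n:ℝ) ^ n := by ring
    _ ≤ Real.exp 1 ^ n * n ! := pow_self_le_exp_mul_factorial n

private lemma aux_pow_div_factorial {t n : ℕ} {M C ρ : ℝ} (hM : 0 ≤ M) (hC : 0 ≤ C) (hρ : 0 ≤ ρ)
    (hMCe : M * C * Real.exp 1 ≤ Real.sqrt ((t:ℝ)+1) / 2) (hn : t + 1 ≤ n) :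
    (M * (C * Real.sqrt (ρ * n))) ^ n / n ! ≤ (Real.sqrt ρ / 2) ^ n := by
  have hn1 : (1:ℕ) ≤ n := le_trans (Nat.le_add_left _ _) hn
  have hnR : (0:ℝ) < n := by exact_mod_cast hn1
  have hsn : 0 < Real.sqrt n := Real.sqrt_pos.mpr hnR
  have hb : 0 ≤ M * (C * Real.sqrt (ρ * n)) := by positivity
  have hkey : M * (C * Real.sqrt (ρ * n)) * Real.exp 1 / n ≤ Real.sqrt ρ / 2 := by
    rw [Real.sqrt_mul hρ]
    rw [div_le_div_iff₀ hnR (by norm_num : (0:ℝ) < 2)]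
    have htn : Real.sqrt ((t:ℝ)+1) ≤ Real.sqrt n := Real.sqrt_le_sqrt (by exact_mod_cast hn)
    have hnn : (n:ℝ) = Real.sqrt n * Real.sqrt n := (Real.mul_self_sqrt hnR.le).symm
    calc M*(C*(Real.sqrt ρ*Real.sqrt n))*Real.exp 1*2
        = (M*C*Real.exp 1) * 2 * (Real.sqrt ρ * Real.sqrt n) := by ring
      _ ≤ (Real.sqrt ((t:ℝ)+1)/2) * 2 * (Real.sqrt ρ * Real.sqrt n) := by
          have h0 : (0:ℝ) ≤ Real.sqrt ρ * Real.sqrt n := by positivity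
          nlinarith [hMCe, h0]
      _ ≤ (Real.sqrt n/2) * 2 * (Real.sqrt ρ * Real.sqrt n) := by
          have h0 : (0:ℝ) ≤ Real.sqrt ρ * Real.sqrt n := by positivity
          nlinarith [htn, h0]
      _ = Real.sqrt ρ * (Real.sqrt n * Real.sqrt n) := by ring
      _ = Real.sqrt ρ * n := by rw [← hnn]
  calc (M * (C * Real.sqrt (ρ * n))) ^ n / n !
      = (M * (C * Real.sqrt (ρ * n))) ^ n * (1 / n !) := by rw [mul_one_div]
    _ ≤ (M * (C * Real.sqrt (ρ * n))) ^ n * (Real.exp 1 / n) ^ n :=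
        mul_le_mul_of_nonneg_left (inv_factorial_le n hn1) (pow_nonneg hb n)
    _ = (M * (C * Real.sqrt (ρ * n)) * (Real.exp 1 / n)) ^ n := (mul_pow _ _ _).symm
    _ ≤ (Real.sqrt ρ / 2) ^ n := by
        refine pow_le_pow_left₀ (by positivity) ?_ n
        rw [← mul_div_assoc]
        exact hkey

private lemma aux_moment {d : ℕ} (μ : Measure (Fin d → ℝ)) (u : Fin d → ℝ)
    (hint : ∀ k : Fin d → ℕ, Integrable (fun x => ∏ j, x j ^ k j) μ) (n : ℕ) :
    Integrable (fun x => (∑ j, u j * x j) ^ n) μ ∧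
    ∫ x, (∑ j, u j * x j) ^ n ∂μ =
      ∑ k ∈ piAntidiag (univ : Finset (Fin d)) n,
        (Nat.multinomial univ k : ℝ) * ((∏ j, u j ^ k j) * ∫ x, ∏ j, x j ^ k j ∂μ) := by
  have hexp : (fun x : Fin d → ℝ => (∑ j, u j * x j) ^ n) =
      fun x => ∑ k ∈ piAntidiag (univ : Finset (Fin d)) n,
        (Nat.multinomial univ k : ℝ) * ((∏ j, u j ^ k j) * ∏ j, x j ^ k j) := by
    funext x
    rw [Finset.sum_pow_eq_sum_piAntidiag]
    refine Finset.sum_congr rfl fun k _ => ?_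
    congr 1
    simp [mul_pow, Finset.prod_mul_distrib]
  have hInt : ∀ k ∈ piAntidiag (univ : Finset (Fin d)) n,
      Integrable (fun x => (Nat.multinomial univ k : ℝ) * ((∏ j, u j ^ k j) * ∏ j, x j ^ k j)) μ :=
    fun k _ => ((hint k).const_mul _).const_mul _
  constructor
  · rw [hexp]; exact integrable_finset_sum _ hInt
  · rw [hexp, integral_finset_sum _ hInt]
    refine Finset.sum_congr rfl fun k _ => ?_
    rw [integral_const_mul, integral_const_mul]

private lemma aux_bound {d : ℕ} (u : Fin d → ℝ) (n : ℕ) (g : (Fin d → ℕ) → ℝ) (B : ℝ)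
    (hg : ∀ k ∈ piAntidiag (univ : Finset (Fin d)) n, |g k| ≤ B) :
    |∑ k ∈ piAntidiag (univ : Finset (Fin d)) n,
        (Nat.multinomial univ k : ℝ) * ((∏ j, u j ^ k j) * g k)| ≤ B * (∑ j, |u j|) ^ n := by
  have hMn : (∑ j, |u j|) ^ n = ∑ k ∈ piAntidiag (univ : Finset (Fin d)) n,
      (Nat.multinomial univ k : ℝ) * ∏ j, |u j| ^ k j :=
    Finset.sum_pow_eq_sum_piAntidiag univ (fun j => |u j|) n
  calc |∑ k ∈ piAntidiag (univ : Finset (Fin d)) n,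
        (Nat.multinomial univ k : ℝ) * ((∏ j, u j ^ k j) * g k)|
      ≤ ∑ k ∈ piAntidiag (univ : Finset (Fin d)) n,
        |(Nat.multinomial univ k : ℝ) * ((∏ j, u j ^ k j) * g k)| := Finset.abs_sum_le_sum_abs _ _
    _ ≤ ∑ k ∈ piAntidiag (univ : Finset (Fin d)) n,
        (Nat.multinomial univ k : ℝ) * ((∏ j, |u j| ^ k j) * B) := by
        refine Finset.sum_le_sum fun k hk => ?_
        rw [abs_mul, abs_mul, Nat.abs_cast, Finset.abs_prod]
        simp_rw [abs_pow]
        gcongr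
        exact hg k hk
    _ = B * (∑ j, |u j|) ^ n := by
        simp_rw [← mul_assoc]
        rw [← Finset.sum_mul, ← hMn, mul_comm]

private lemma aux_rep {d : ℕ} (μ : Measure (Fin d → ℝ)) [IsProbabilityMeasure μ]
    (u : Fin d → ℝ)
    (hSint : ∀ n : ℕ, Integrable (fun x => (∑ j, u j * x j) ^ n) μ)
    (hsum : Summable fun n : ℕ => (∫ x, |∑ j, u j * x j| ^ n ∂μ) / n !) :
    ∫ x, Complex.exp (Complex.I * ((∑ j, u j * x j : ℝ) : ℂ)) ∂μ
      = ∑' n : ℕ, (Complex.I ^ n / n !) * ((∫ x, (∑ j, u j * x j) ^ n ∂μ : ℝ) : ℂ) := by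
  set S : (Fin d → ℝ) → ℝ := fun x => ∑ j, u j * x j with hSdef
  set f : ℕ → (Fin d → ℝ) → ℂ := fun n x => (Complex.I ^ n / n !) * ((S x ^ n : ℝ) : ℂ) with hfdef
  have hScont : Continuous S := by
    apply continuous_finset_sum; intro j _; exact continuous_const.mul (continuous_apply j)
  have hpt : ∀ x, Complex.exp (Complex.I * (S x : ℂ)) = ∑' n : ℕ, f n x := by
    intro x
    rw [Complex.exp_eq_exp_ℂ, NormedSpace.exp_eq_tsum_div]
    refine tsum_congr fun n => ?_
    rw [hfdef]; push_cast; ring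
  have hmeas : ∀ n : ℕ, AEStronglyMeasurable (f n) μ := by
    intro n
    exact (continuous_const.mul (Complex.continuous_ofReal.comp (hScont.pow n))).aestronglyMeasurable
  have hInt : ∀ n, Integrable (f n) μ := fun n => ((hSint n).ofReal).const_mul _
  have hnormeq : ∀ n x, ‖f n x‖ = |S x| ^ n / n ! := by
    intro n x
    rw [hfdef]
    simp [norm_mul, norm_div, abs_pow]
    ring
  have habs : ∀ n, (∫ x, ‖f n x‖ ∂μ) = (∫ x, |S x| ^ n ∂μ) / n ! := by
    intro n
    simp_rw [hnormeq]
    rw [integral_div]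
  have hfin : (∑' n : ℕ, ∫⁻ x, ‖f n x‖₊ ∂μ) ≠ ⊤ := by
    have heq : ∀ n : ℕ, (∫⁻ x, ‖f n x‖₊ ∂μ) = ENNReal.ofReal ((∫ x, |S x| ^ n ∂μ) / n !) := by
      intro n
      rw [← habs]; exact (ofReal_integral_norm_eq_lintegral_enorm (hInt n)).symm
    rw [funext heq] at *
    rw [← ENNReal.ofReal_tsum_of_nonneg (fun n => by positivity) hsum]
    exact ENNReal.ofReal_ne_top
  calc ∫ x, Complex.exp (Complex.I * (S x : ℂ)) ∂μ
      = ∫ x, ∑' n : ℕ, f n x ∂μ := by simp_rw [hpt]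
    _ = ∑' n : ℕ, ∫ x, f n x ∂μ := integral_tsum hmeas hfin
    _ = ∑' n : ℕ, (Complex.I ^ n / n !) * ((∫ x, S x ^ n ∂μ : ℝ) : ℂ) := by
        refine tsum_congr fun n => ?_
        rw [hfdef]
        simp only []
        rw [integral_const_mul]
        congr 1
        exact integral_ofReal

private lemma aux_key {d : ℕ} (μ : Measure (Fin d → ℝ)) [IsProbabilityMeasure μ]
    (t : ℕ) (C : ℝ) (u : Fin d → ℝ)
    (hC : 0 < C) (hM : 0 < ∑ j, |u j|)
    (hint : ∀ k : Fin d → ℕ, Integrable (fun x => ∏ j, x j ^ k j) μ)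
    (hbound : ∀ k : Fin d → ℕ, t < ∑ j, k j →
      |∫ x, ∏ j, x j ^ k j ∂μ| ≤ (C * Real.sqrt (∑ j, k j)) ^ (∑ j, k j))
    (hMCe : (∑ j, |u j|) * C * Real.exp 1 ≤ Real.sqrt ((t : ℝ) + 1) / 2) :
    (∀ n : ℕ, t < n →
      |∫ x, (∑ j, u j * x j) ^ n ∂μ| ≤ ((∑ j, |u j|) * (C * Real.sqrt n)) ^ n)
    ∧ Summable (fun n : ℕ => (∫ x, |∑ j, u j * x j| ^ n ∂μ) / n !) := by
  have hSint : ∀ m : ℕ, Integrable (fun x => (∑ j, u j * x j) ^ m) μ :=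
    fun m => (aux_moment μ u hint m).1
  have hA : ∀ n : ℕ, t < n →
      |∫ x, (∑ j, u j * x j) ^ n ∂μ| ≤ ((∑ j, |u j|) * (C * Real.sqrt n)) ^ n := by
    intro n hn
    rw [(aux_moment μ u hint n).2]
    have h := aux_bound u n (fun k => ∫ x, ∏ j, x j ^ k j ∂μ) ((C * Real.sqrt n) ^ n) ?_
    · calc _ ≤ (C * Real.sqrt n) ^ n * (∑ j, |u j|) ^ n := h
        _ = ((∑ j, |u j|) * (C * Real.sqrt n)) ^ n := by rw [mul_pow, mul_pow]; ring
    · intro k hk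
      have hks : (∑ j, k j) = n := (Finset.mem_piAntidiag.mp hk).1
      have hksR : (∑ j, (k j : ℝ)) = (n : ℝ) := by exact_mod_cast hks
      have hb := hbound k (by rw [hks]; exact hn)
      rw [hks, hksR] at hb
      exact hb
  refine ⟨hA, ?_⟩
  have hDle : ∀ n : ℕ, t + 1 ≤ n →
      (∫ x, |∑ j, u j * x j| ^ n ∂μ) ≤ ((∑ j, |u j|) * (C * Real.sqrt ((2:ℝ) * n))) ^ n := by
    intro n hn
    set M : ℝ := ∑ j, |u j| with hMdef
    set a : ℝ := M * (C * Real.sqrt ((2:ℝ) * n)) with hadef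
    have hn1 : (1:ℕ) ≤ n := le_trans (Nat.le_add_left _ _) hn
    have h2n : (0:ℝ) < (2:ℝ) * n := by
      have : (0:ℝ) < (n:ℝ) := by exact_mod_cast hn1
      linarith
    have ha : 0 < a := mul_pos hM (mul_pos hC (Real.sqrt_pos.mpr h2n))
    have hptw : ∀ x : Fin d → ℝ,
        2 * a ^ n * |∑ j, u j * x j| ^ n ≤ (∑ j, u j * x j) ^ (2*n) + a ^ n * a ^ n := by
      intro x
      have h1 : (∑ j, u j * x j) ^ (2*n) = (|∑ j, u j * x j| ^ n) ^ 2 := by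
        rw [← abs_pow, sq_abs, ← pow_mul, Nat.mul_comm]
      rw [h1]
      nlinarith [sq_nonneg (|∑ j, u j * x j| ^ n - a ^ n), abs_nonneg (∑ j, u j * x j),
        pow_nonneg (abs_nonneg (∑ j, u j * x j)) n, pow_pos ha n]
    have hint1 : Integrable (fun x => 2 * a ^ n * |∑ j, u j * x j| ^ n) μ := by
      have heq : (fun x : Fin d → ℝ => |∑ j, u j * x j| ^ n)
          = fun x => |(∑ j, u j * x j) ^ n| := by
        funext x; rw [abs_pow]
      exact (heq ▸ (hSint n).abs).const_mul _
    have hint2 : Integrable (fun x => (∑ j, u j * x j) ^ (2*n) + a ^ n * a ^ n) μ :=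
      (hSint (2*n)).add (integrable_const _)
    have hmono := integral_mono hint1 hint2 hptw
    rw [integral_const_mul] at hmono
    rw [integral_add (hSint (2*n)) (integrable_const _), integral_const] at hmono
    simp only [probReal_univ, one_smul] at hmono
    have hS2n : (∫ x, (∑ j, u j * x j) ^ (2*n) ∂μ) ≤ a ^ n * a ^ n := by
      have h2 := hA (2*n) (by omega)
      have hcast : Real.sqrt ((2*n : ℕ) : ℝ) = Real.sqrt ((2:ℝ) * n) := by push_cast; ring_nf
      rw [hcast] at h2
      calc (∫ x, (∑ j, u j * x j) ^ (2*n) ∂μ) ≤ |∫ x, (∑ j, u j * x j) ^ (2*n) ∂μ| := le_abs_self _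
        _ ≤ a ^ (2*n) := h2
        _ = a ^ n * a ^ n := by rw [two_mul, pow_add]
    have hintnonneg : 0 ≤ ∫ x, |∑ j, u j * x j| ^ n ∂μ :=
      integral_nonneg fun x => by positivity
    nlinarith [pow_pos ha n]
  refine (summable_nat_add_iff (t+1)).mp ?_
  have hr0 : (0:ℝ) ≤ Real.sqrt 2 / 2 := by positivity
  have hr1 : Real.sqrt 2 / 2 < 1 := by
    rw [div_lt_one (by norm_num : (0:ℝ) < 2)]
    nlinarith [Real.sq_sqrt (by norm_num : (0:ℝ) ≤ 2), Real.sqrt_nonneg 2]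
  have hgeo : Summable (fun k : ℕ => (Real.sqrt 2 / 2) ^ (k + (t+1))) := by
    simp_rw [pow_add]
    exact (summable_geometric_of_lt_one hr0 hr1).mul_right _
  refine Summable.of_nonneg_of_le (fun k => ?_) (fun k => ?_) hgeo
  · have : 0 ≤ ∫ x, |∑ j, u j * x j| ^ (k + (t+1)) ∂μ :=
      integral_nonneg fun x => by positivity
    positivity
  · set n := k + (t+1) with hndef
    have hn : t + 1 ≤ n := Nat.le_add_left _ _
    calc (∫ x, |∑ j, u j * x j| ^ n ∂μ) / n !
        ≤ ((∑ j, |u j|) * (C * Real.sqrt ((2:ℝ) * n))) ^ n / n ! := by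
          gcongr
          exact hDle n hn
      _ ≤ (Real.sqrt 2 / 2) ^ n :=
          aux_pow_div_factorial hM.le hC.le (by norm_num) hMCe hn

set_option maxHeartbeats 1000000 in
/-- Bound on characteristic functions from moments. If every mixed moment of
order `≤ t` of `p` differs from that of `q` by at most `ε`, and all mixed moments of both
of order `> t` are bounded by `(C√k)^k`, then for `‖u‖₁ ≤ √(t+1)/(2eC)`,
`|φ(u) − γ(u)| ≤ ε·exp(‖u‖₁) + 2^{1−t}`. -/
theorem stmt9 (d : ℕ) (p q : Measure (Fin d → ℝ))
    [IsProbabilityMeasure p] [IsProbabilityMeasure q]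
    (t : ℕ) (ε C : ℝ) (hε : 0 < ε) (hC : 0 ≤ C)
    (hintp : ∀ k : Fin d → ℕ, Integrable (fun x => ∏ j, x j ^ k j) p)
    (hintq : ∀ k : Fin d → ℕ, Integrable (fun x => ∏ j, x j ^ k j) q)
    (hclose : ∀ k : Fin d → ℕ, (∑ j, k j) ≤ t →
      |(∫ x, ∏ j, x j ^ k j ∂p) - ∫ x, ∏ j, x j ^ k j ∂q| ≤ ε)
    (hboundp : ∀ k : Fin d → ℕ, t < ∑ j, k j →
      |∫ x, ∏ j, x j ^ k j ∂p| ≤ (C * Real.sqrt (∑ j, k j)) ^ (∑ j, k j))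
    (hboundq : ∀ k : Fin d → ℕ, t < ∑ j, k j →
      |∫ x, ∏ j, x j ^ k j ∂q| ≤ (C * Real.sqrt (∑ j, k j)) ^ (∑ j, k j))
    (u : Fin d → ℝ)
    (hu : (∑ j, |u j|) ≤ Real.sqrt ((t : ℝ) + 1) / (2 * Real.exp 1 * C)) :
    ‖(∫ x, Complex.exp (Complex.I * ((∑ j, u j * x j : ℝ) : ℂ)) ∂p) -
        ∫ x, Complex.exp (Complex.I * ((∑ j, u j * x j : ℝ) : ℂ)) ∂q‖ ≤
      ε * Real.exp (∑ j, |u j|) + (2 : ℝ) ^ ((1 : ℤ) - (t : ℤ)) := by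
  classical
  have hM0 : 0 ≤ ∑ j, |u j| := Finset.sum_nonneg fun j _ => abs_nonneg _
  rcases eq_or_lt_of_le hM0 with hM | hM
  · -- trivial case u = 0
    have hu0 : ∀ x : Fin d → ℝ, (∑ j, u j * x j) = 0 := by
      intro x
      refine Finset.sum_eq_zero fun j hj => ?_
      have h0 : u j = 0 := abs_eq_zero.mp
        ((Finset.sum_eq_zero_iff_of_nonneg (fun j _ => abs_nonneg (u j))).mp hM.symm j (mem_univ j))
      rw [h0, zero_mul]
    simp only [hu0, Complex.ofReal_zero, mul_zero, Complex.exp_zero]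
    rw [integral_const, integral_const]
    simp only [probReal_univ, one_smul, sub_self, norm_zero]
    positivity
  · have he : 0 < Real.exp 1 := Real.exp_pos 1
    have hC0 : 0 < C := by
      rcases hC.lt_or_eq with h | h
      · exact h
      · exfalso
        rw [← h, mul_zero, div_zero] at hu
        linarith
    have hMCe : (∑ j, |u j|) * C * Real.exp 1 ≤ Real.sqrt ((t : ℝ) + 1) / 2 := by
      rw [le_div_iff₀ (by positivity)] at hu
      nlinarith [hu]
    obtain ⟨hAp, hsump⟩ := aux_key p t C u hC0 hM hintp hboundp hMCe
    obtain ⟨hAq, hsumq⟩ := aux_key q t C u hC0 hM hintq hboundq hMCe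
    have hSintp : ∀ n, Integrable (fun x => (∑ j, u j * x j) ^ n) p :=
      fun n => (aux_moment p u hintp n).1
    have hSintq : ∀ n, Integrable (fun x => (∑ j, u j * x j) ^ n) q :=
      fun n => (aux_moment q u hintq n).1
    rw [aux_rep p u hSintp hsump, aux_rep q u hSintq hsumq]
    set Ap : ℕ → ℝ := fun n => ∫ x, (∑ j, u j * x j) ^ n ∂p with hApdef
    set Aq : ℕ → ℝ := fun n => ∫ x, (∑ j, u j * x j) ^ n ∂q with hAqdef
    set e : ℕ → ℂ := fun n => (Complex.I ^ n / n !) * (((Ap n - Aq n : ℝ)) : ℂ) with hedef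
    have hnormc : ∀ (r : ℝ) (n : ℕ), ‖(Complex.I ^ n / n !) * ((r : ℝ) : ℂ)‖ = |r| / n ! := by
      intro r n
      simp [norm_mul, norm_div]
      ring
    have habsAp : ∀ n, |Ap n| ≤ ∫ x, |∑ j, u j * x j| ^ n ∂p := by
      intro n
      rw [hApdef]
      simp only []
      rw [← Real.norm_eq_abs]
      refine le_trans (norm_integral_le_integral_norm _) (le_of_eq ?_)
      congr 1
      funext x
      rw [Real.norm_eq_abs, abs_pow]
    have habsAq : ∀ n, |Aq n| ≤ ∫ x, |∑ j, u j * x j| ^ n ∂q := by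
      intro n
      rw [hAqdef]
      simp only []
      rw [← Real.norm_eq_abs]
      refine le_trans (norm_integral_le_integral_norm _) (le_of_eq ?_)
      congr 1
      funext x
      rw [Real.norm_eq_abs, abs_pow]
    have hsc : Summable (fun n : ℕ => (Complex.I ^ n / n !) * ((Ap n : ℝ) : ℂ)) := by
      refine Summable.of_norm (Summable.of_nonneg_of_le (fun n => norm_nonneg _)
        (fun n => ?_) hsump)
      rw [hnormc]
      gcongr
      exact habsAp n
    have hsd : Summable (fun n : ℕ => (Complex.I ^ n / n !) * ((Aq n : ℝ) : ℂ)) := by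
      refine Summable.of_norm (Summable.of_nonneg_of_le (fun n => norm_nonneg _)
        (fun n => ?_) hsumq)
      rw [hnormc]
      gcongr
      exact habsAq n
    rw [← hsc.tsum_sub hsd]
    have hee : (fun n : ℕ => (Complex.I ^ n / n !) * ((Ap n : ℝ) : ℂ)
        - (Complex.I ^ n / n !) * ((Aq n : ℝ) : ℂ)) = e := by
      funext n
      rw [hedef]
      push_cast
      ring
    rw [hee]
    have hnorme : ∀ n, ‖e n‖ = |Ap n - Aq n| / n ! := fun n => hnormc _ n
    have hsume_norm : Summable fun n => ‖e n‖ := by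
      refine Summable.of_nonneg_of_le (fun n => norm_nonneg _) (fun n => ?_) (hsump.add hsumq)
      rw [hnorme]
      have htri : |Ap n - Aq n| ≤ |Ap n| + |Aq n| := abs_sub _ _
      calc |Ap n - Aq n| / (n ! : ℝ)
          ≤ (|Ap n| + |Aq n|) / n ! := by gcongr
        _ ≤ ((∫ x, |∑ j, u j * x j| ^ n ∂p) + ∫ x, |∑ j, u j * x j| ^ n ∂q) / n ! := by
            gcongr
            · exact habsAp n
            · exact habsAq n
        _ = (∫ x, |∑ j, u j * x j| ^ n ∂p) / n ! + (∫ x, |∑ j, u j * x j| ^ n ∂q) / n ! := by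
            rw [add_div]
    have hsume : Summable e := hsume_norm.of_norm
    rw [← hsume.sum_add_tsum_nat_add (t+1)]
    refine le_trans (norm_add_le _ _) (add_le_add ?_ ?_)
    · -- head
      have hclose' : ∀ n : ℕ, n ≤ t → |Ap n - Aq n| ≤ ε * (∑ j, |u j|) ^ n := by
        intro n hn
        rw [hApdef, hAqdef]
        simp only []
        rw [(aux_moment p u hintp n).2, (aux_moment q u hintq n).2, ← Finset.sum_sub_distrib]
        have hcong : ∀ k ∈ piAntidiag (univ : Finset (Fin d)) n,
            (Nat.multinomial univ k : ℝ) * ((∏ j, u j ^ k j) * ∫ x, ∏ j, x j ^ k j ∂p)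
              - (Nat.multinomial univ k : ℝ) * ((∏ j, u j ^ k j) * ∫ x, ∏ j, x j ^ k j ∂q)
            = (Nat.multinomial univ k : ℝ) * ((∏ j, u j ^ k j) *
                ((∫ x, ∏ j, x j ^ k j ∂p) - ∫ x, ∏ j, x j ^ k j ∂q)) := fun k _ => by ring
        rw [Finset.sum_congr rfl hcong]
        refine aux_bound u n _ ε fun k hk => ?_
        have hks : (∑ j, k j) = n := (Finset.mem_piAntidiag.mp hk).1
        exact hclose k (by rw [hks]; exact hn)
      calc ‖∑ n ∈ range (t+1), e n‖ ≤ ∑ n ∈ range (t+1), ‖e n‖ := norm_sum_le _ _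
        _ ≤ ∑ n ∈ range (t+1), ε * ((∑ j, |u j|) ^ n / n !) := by
            refine Finset.sum_le_sum fun n hn => ?_
            rw [hnorme, mul_div_assoc']
            gcongr
            exact hclose' n (Nat.lt_succ_iff.mp (Finset.mem_range.mp hn))
        _ = ε * ∑ n ∈ range (t+1), (∑ j, |u j|) ^ n / n ! := by rw [← Finset.mul_sum]
        _ ≤ ε * Real.exp (∑ j, |u j|) :=
            mul_le_mul_of_nonneg_left (Real.sum_le_exp_of_nonneg hM0 _) hε.le
    · -- tail
      have hterm2 : ∀ n : ℕ, t+1 ≤ n → ‖e n‖ ≤ 2 * ((1:ℝ)/2) ^ n := by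
        intro n hn
        rw [hnorme]
        have h1 : |Ap n - Aq n| ≤ 2 * ((∑ j, |u j|) * (C * Real.sqrt n)) ^ n := by
          have hp' := hAp n (by omega)
          have hq' := hAq n (by omega)
          have htri : |Ap n - Aq n| ≤ |Ap n| + |Aq n| := abs_sub _ _
          rw [hApdef, hAqdef]
          simp only []
          nlinarith [hp', hq', htri]
        have h2 : ((∑ j, |u j|) * (C * Real.sqrt n)) ^ n / n ! ≤ ((1:ℝ)/2) ^ n := by
          have := aux_pow_div_factorial (t := t) (n := n) (ρ := 1) hM0 hC (by norm_num) hMCe hn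
          rw [one_mul, Real.sqrt_one] at this
          exact this
        calc |Ap n - Aq n| / (n ! : ℝ)
            ≤ 2 * ((∑ j, |u j|) * (C * Real.sqrt n)) ^ n / n ! := by gcongr
          _ = 2 * (((∑ j, |u j|) * (C * Real.sqrt n)) ^ n / n !) := by ring
          _ ≤ 2 * ((1:ℝ)/2) ^ n := by linarith [h2]
      have hgeo : Summable (fun k : ℕ => 2 * ((1:ℝ)/2) ^ (k + (t+1))) := by
        simp_rw [pow_add]
        exact ((summable_geometric_of_lt_one (by norm_num) (by norm_num)).mul_right _).mul_left 2
      calc ‖∑' k, e (k + (t+1))‖ ≤ ∑' k, ‖e (k + (t+1))‖ :=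
            norm_tsum_le_tsum_norm ((summable_nat_add_iff (f := fun n => ‖e n‖) (t+1)).mpr hsume_norm)
        _ ≤ ∑' k, 2 * ((1:ℝ)/2) ^ (k + (t+1)) := by
            refine Summable.tsum_le_tsum (fun k => hterm2 _ (Nat.le_add_left _ _))
              ((summable_nat_add_iff (f := fun n => ‖e n‖) (t+1)).mpr hsume_norm) hgeo
        _ = (2 : ℝ) ^ ((1 : ℤ) - (t : ℤ)) := by
            have hsum2 : ∑' k : ℕ, ((1:ℝ)/2) ^ k = 2 := by
              rw [tsum_geometric_of_lt_one (by norm_num) (by norm_num)]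
              norm_num
            calc ∑' k : ℕ, 2 * ((1:ℝ)/2) ^ (k + (t+1))
                = ∑' k : ℕ, (2 * ((1:ℝ)/2) ^ (t+1)) * ((1:ℝ)/2) ^ k := by
                  refine tsum_congr fun k => ?_
                  rw [pow_add]
                  ring
              _ = (2 * ((1:ℝ)/2) ^ (t+1)) * ∑' k : ℕ, ((1:ℝ)/2) ^ k := tsum_mul_left
              _ = 4 * ((1:ℝ)/2) ^ (t+1) := by rw [hsum2]; ring
              _ = (2 : ℝ) ^ ((1 : ℤ) - (t : ℤ)) := by
                  rw [zpow_sub₀ (by norm_num : (2:ℝ) ≠ 0), zpow_one, zpow_natCast]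
                  rw [div_pow, one_pow]
                  field_simp
                  ring
end

section
/- Let p, q be probability measures on ℝ^d whose cumulant generating functions both exist on the imaginary axis with characteristic functions φ, γ. Suppose each joint cumulant of order k of p differs from that of q by at most ε^k in absolute value. Then for all u ∈ ℝ^d, |φ(u) − γ(u)| ≤ max( exp(exp(ε‖u‖₁) − 1) − 1, 1 − exp(1 − exp(ε‖u‖₁)) ). -/
open MeasureTheory Finset

set_option maxHeartbeats 1000000

lemma myNormTerm {d : ℕ} (c : ℂ) (v : Fin d → ℝ) (k : Fin d → ℕ) :
    ‖c * ∏ j, (Complex.I * (v j : ℂ)) ^ (k j) / (Nat.factorial (k j) : ℂ)‖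
      = ‖c‖ * ∏ j, |v j| ^ (k j) / (Nat.factorial (k j) : ℝ) := by
  rw [norm_mul, norm_prod]
  congr 1
  refine Finset.prod_congr rfl fun j _ => ?_
  simp [norm_div, norm_pow, norm_mul, Complex.norm_natCast, abs_pow]

lemma myNormExpI (r : ℝ) : ‖Complex.exp (Complex.I * (r : ℂ))‖ = 1 := by
  rw [Complex.norm_exp]
  simp [Complex.mul_re]

lemma myHasSumPi {d : ℕ} (f : Fin d → ℕ → ℝ) (s : Fin d → ℝ)
    (h0 : ∀ j n, 0 ≤ f j n) (h : ∀ j, HasSum (f j) (s j)) :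
    HasSum (fun k : Fin d → ℕ => ∏ j, f j (k j)) (∏ j, s j) := by
  induction d with
  | zero =>
      have h1 : (fun k : Fin 0 → ℕ => ∏ j, f j (k j)) (default) = ∏ j, s j := by simp
      exact h1 ▸ hasSum_single default (fun b' hb' => absurd (Subsingleton.elim b' default) hb')
  | succ n ih =>
      have h1 : HasSum (fun k : Fin n → ℕ => ∏ j, f (Fin.succ j) (k j))
          (∏ j : Fin n, s (Fin.succ j)) := ih _ _ (fun j m => h0 _ _) (fun j => h _)
      have hsummable : Summable (fun x : ℕ × (Fin n → ℕ) =>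
          f 0 x.1 * ∏ j, f (Fin.succ j) (x.2 j)) := by
        apply Summable.mul_of_nonneg (h 0).summable h1.summable
        · exact fun m => h0 _ _
        · exact fun k => Finset.prod_nonneg fun j _ => h0 _ _
      have h2 : HasSum (fun x : ℕ × (Fin n → ℕ) => f 0 x.1 * ∏ j, f (Fin.succ j) (x.2 j))
          (s 0 * ∏ j : Fin n, s (Fin.succ j)) := by
        have hts := hsummable.hasSum
        have heq := HasSum.mul_eq (h 0) h1 hts
        rw [heq]
        exact hts
      have h3 := ((Fin.consEquiv (fun _ => ℕ)).symm.hasSum_iff).mpr h2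
      have h4 : ((fun x : ℕ × (Fin n → ℕ) => f 0 x.1 * ∏ j, f (Fin.succ j) (x.2 j)) ∘
          (Fin.consEquiv (fun _ => ℕ)).symm) = fun k : Fin (n+1) → ℕ => ∏ j, f j (k j) := by
        funext k
        simp [Fin.consEquiv, Fin.prod_univ_succ, Fin.tail]
      rw [h4] at h3
      simpa [Fin.prod_univ_succ] using h3

lemma myNormExpSubOne (z : ℂ) : ‖Complex.exp z - 1‖ ≤ Real.exp ‖z‖ - 1 := by
  have hz : HasSum (fun n : ℕ => z ^ n / (Nat.factorial n : ℂ)) (Complex.exp z) := by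
    rw [Complex.exp_eq_exp_ℂ]; exact NormedSpace.expSeries_div_hasSum_exp z
  have hr : HasSum (fun n : ℕ => ‖z‖ ^ n / (Nat.factorial n : ℝ)) (Real.exp ‖z‖) := by
    rw [Real.exp_eq_exp_ℝ]; exact NormedSpace.expSeries_div_hasSum_exp ‖z‖
  have hz1 : HasSum (fun n : ℕ => z ^ (n + 1) / (Nat.factorial (n + 1) : ℂ))
      (Complex.exp z - 1) := by
    have := (hasSum_nat_add_iff' (f := fun n : ℕ => z ^ n / (Nat.factorial n : ℂ)) 1).mpr hz
    simpa using this
  have hr1 : HasSum (fun n : ℕ => ‖z‖ ^ (n + 1) / (Nat.factorial (n + 1) : ℝ))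
      (Real.exp ‖z‖ - 1) := by
    have := (hasSum_nat_add_iff' (f := fun n : ℕ => ‖z‖ ^ n / (Nat.factorial n : ℝ)) 1).mpr hr
    simpa using this
  calc ‖Complex.exp z - 1‖ = ‖∑' n : ℕ, z ^ (n + 1) / (Nat.factorial (n + 1) : ℂ)‖ := by
        rw [hz1.tsum_eq]
    _ ≤ ∑' n : ℕ, ‖z ^ (n + 1) / (Nat.factorial (n + 1) : ℂ)‖ := by
        apply norm_tsum_le_tsum_norm
        apply hr1.summable.congr
        intro n
        simp [norm_div, norm_pow, Complex.norm_natCast]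
    _ = Real.exp ‖z‖ - 1 := by
        rw [← hr1.tsum_eq]
        exact tsum_congr fun n => by simp [norm_div, norm_pow, Complex.norm_natCast]

lemma myCharFunNeZero {d : ℕ} (p : Measure (Fin d → ℝ)) [IsProbabilityMeasure p]
    (κ : (Fin d → ℕ) → ℂ)
    (hp : ∀ u : Fin d → ℝ, HasSum (fun k : {k : Fin d → ℕ // 0 < ∑ j, k j} =>
        κ k * ∏ j, (Complex.I * (u j : ℂ)) ^ (k.1 j) / (Nat.factorial (k.1 j) : ℂ))
      (Complex.log (∫ x, Complex.exp (Complex.I * ((∑ j, u j * x j : ℝ) : ℂ)) ∂p)))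
    (u : Fin d → ℝ) :
    (∫ x, Complex.exp (Complex.I * ((∑ j, u j * x j : ℝ) : ℂ)) ∂p) ≠ 0 := by
  set φ : (Fin d → ℝ) → ℂ :=
    fun v => ∫ x, Complex.exp (Complex.I * ((∑ j, v j * x j : ℝ) : ℂ)) ∂p with hφdef
  set h : ℝ → ℂ := fun t => φ (fun j => t * u j) with hhdef
  have hcx : ∀ v : Fin d → ℝ,
      Continuous fun x : Fin d → ℝ => Complex.exp (Complex.I * ((∑ j, v j * x j : ℝ) : ℂ)) := by
    intro v
    have : Continuous fun x : Fin d → ℝ => (∑ j, v j * x j : ℝ) := by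
      apply continuous_finset_sum
      intro j _
      exact continuous_const.mul (continuous_apply j)
    exact Complex.continuous_exp.comp (continuous_const.mul (Complex.continuous_ofReal.comp this))
  have hconth : Continuous h := by
    apply continuous_of_dominated (bound := fun _ : Fin d → ℝ => (1 : ℝ))
    · intro t
      exact (hcx _).aestronglyMeasurable
    · intro t
      exact Filter.Eventually.of_forall fun x => le_of_eq (myNormExpI _)
    · exact integrable_const 1
    · refine Filter.Eventually.of_forall fun x => ?_
      have : Continuous fun t : ℝ => (∑ j, (t * u j) * x j : ℝ) := by
        apply continuous_finset_sum
        intro j _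
        exact (continuous_id.mul continuous_const).mul continuous_const
      exact Complex.continuous_exp.comp (continuous_const.mul (Complex.continuous_ofReal.comp this))
  set Fs : ℝ → ℂ := fun t => ∑' k : {k : Fin d → ℕ // 0 < ∑ j, k j},
      κ k * ∏ j, (Complex.I * ((t * u j : ℝ) : ℂ)) ^ (k.1 j) / (Nat.factorial (k.1 j) : ℂ)
    with hFsdef
  have keyF : ∀ t : ℝ, Fs t = Complex.log (h t) := fun t => (hp (fun j => t * u j)).tsum_eq
  have hcontF : Continuous Fs := by
    rw [continuous_iff_continuousAt]
    intro t₀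
    set R : ℝ := |t₀| + 1 with hRdef
    have hRpos : 0 < R := lt_of_le_of_lt (abs_nonneg t₀) (lt_add_one _)
    have hmem : t₀ ∈ Metric.ball (0 : ℝ) R := by
      simp only [Metric.mem_ball, Real.dist_eq, sub_zero, hRdef]
      exact lt_add_one _
    have hcontOn : ContinuousOn Fs (Metric.ball (0 : ℝ) R) := by
      apply continuousOn_tsum
        (u := fun k : {k : Fin d → ℕ // 0 < ∑ j, k j} =>
          ‖κ k.1‖ * ∏ j, |R * u j| ^ (k.1 j) / (Nat.factorial (k.1 j) : ℝ))
      · intro k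
        apply Continuous.continuousOn
        apply continuous_const.mul
        apply continuous_finset_prod
        intro j _
        apply Continuous.div_const
        apply Continuous.pow
        exact continuous_const.mul
          (Complex.continuous_ofReal.comp ((continuous_id.mul continuous_const)))
      · have := ((hp (fun j => R * u j)).summable).norm
        apply this.congr
        intro k
        exact myNormTerm (κ k.1) (fun j => R * u j) k.1
      · intro k t ht
        rw [myNormTerm (κ k.1) (fun j => t * u j) k.1]
        apply mul_le_mul_of_nonneg_left _ (norm_nonneg _)
        apply Finset.prod_le_prod
        · intro j _
          positivity
        · intro j _
          apply div_le_div_of_nonneg_right _ (by positivity)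
          · apply pow_le_pow_left₀ (abs_nonneg _)
            rw [abs_mul, abs_mul, abs_of_pos hRpos]
            apply mul_le_mul_of_nonneg_right _ (abs_nonneg _)
            have : |t| < R := by
              simpa [Real.dist_eq] using ht
            exact le_of_lt this
    exact hcontOn.continuousAt (Metric.isOpen_ball.mem_nhds hmem)
  have hA : {t : ℝ | h t = Complex.exp (Fs t)} = {t : ℝ | h t ≠ 0} := by
    ext t
    simp only [Set.mem_setOf_eq]
    constructor
    · intro ht
      rw [ht]
      exact Complex.exp_ne_zero _
    · intro ht
      rw [keyF t, Complex.exp_log ht]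
  have hclosed : IsClosed {t : ℝ | h t = Complex.exp (Fs t)} :=
    isClosed_eq hconth (Complex.continuous_exp.comp hcontF)
  have hopen : IsOpen {t : ℝ | h t = Complex.exp (Fs t)} := by
    rw [hA]
    exact isOpen_ne_fun hconth continuous_const
  have hh0 : h (0 : ℝ) = 1 := by
    simp [hhdef, hφdef]
  have h0mem : (0 : ℝ) ∈ {t : ℝ | h t = Complex.exp (Fs t)} := by
    simp only [Set.mem_setOf_eq]
    rw [keyF, hh0, Complex.log_one, Complex.exp_zero]
  have huniv : {t : ℝ | h t = Complex.exp (Fs t)} = Set.univ :=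
    IsClopen.eq_univ ⟨hclosed, hopen⟩ ⟨0, h0mem⟩
  have h1mem : h (1 : ℝ) ≠ 0 := by
    have : (1 : ℝ) ∈ {t : ℝ | h t = Complex.exp (Fs t)} := huniv ▸ Set.mem_univ _
    rw [Set.mem_setOf_eq] at this
    rw [this]
    exact Complex.exp_ne_zero _
  have heq1 : (fun j => (1 : ℝ) * u j) = u := by
    funext j
    rw [one_mul]
  intro hc
  apply h1mem
  show φ (fun j => 1 * u j) = 0
  rw [heq1]
  exact hc

/-- Bound on characteristic functions from cumulants. Suppose the cumulant
expansions of `p` and `q` exist on the imaginary axis: there are joint cumulants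
`κp, κq : (Fin d → ℕ) → ℂ` such that for all `u`, the series
`∑_k κ(k) ∏_j (i u_j)^{k_j}/k_j!` (over multi-indices `k ≠ 0`) sums to the logarithm of
the characteristic function. If each cumulant of order `k` of `p` differs from that of `q`
by at most `ε^k`, then for all `u`,
`|φ(u) − γ(u)| ≤ max(exp(exp(ε‖u‖₁) − 1) − 1, 1 − exp(1 − exp(ε‖u‖₁)))`. -/
theorem stmt10 (d : ℕ) (p q : Measure (Fin d → ℝ))
    [IsProbabilityMeasure p] [IsProbabilityMeasure q]
    (κp κq : (Fin d → ℕ) → ℂ) (ε : ℝ) (hε : 0 ≤ ε)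
    (hp : ∀ u : Fin d → ℝ,
      HasSum (fun k : {k : Fin d → ℕ // 0 < ∑ j, k j} =>
          κp k * ∏ j, (Complex.I * (u j : ℂ)) ^ (k.1 j) / (Nat.factorial (k.1 j) : ℂ))
        (Complex.log (∫ x, Complex.exp (Complex.I * ((∑ j, u j * x j : ℝ) : ℂ)) ∂p)))
    (hq : ∀ u : Fin d → ℝ,
      HasSum (fun k : {k : Fin d → ℕ // 0 < ∑ j, k j} =>
          κq k * ∏ j, (Complex.I * (u j : ℂ)) ^ (k.1 j) / (Nat.factorial (k.1 j) : ℂ))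
        (Complex.log (∫ x, Complex.exp (Complex.I * ((∑ j, u j * x j : ℝ) : ℂ)) ∂q)))
    (hκ : ∀ k : Fin d → ℕ, 0 < ∑ j, k j → ‖κp k - κq k‖ ≤ ε ^ (∑ j, k j))
    (u : Fin d → ℝ) :
    ‖(∫ x, Complex.exp (Complex.I * ((∑ j, u j * x j : ℝ) : ℂ)) ∂p) -
        ∫ x, Complex.exp (Complex.I * ((∑ j, u j * x j : ℝ) : ℂ)) ∂q‖ ≤
      max (Real.exp (Real.exp (ε * ∑ j, |u j|) - 1) - 1)
        (1 - Real.exp (1 - Real.exp (ε * ∑ j, |u j|))) := by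
  have hφp := myCharFunNeZero p κp hp u
  have hφq := myCharFunNeZero q κq hq u
  set φp : ℂ := ∫ x, Complex.exp (Complex.I * ((∑ j, u j * x j : ℝ) : ℂ)) ∂p with hφpdef
  set φq : ℂ := ∫ x, Complex.exp (Complex.I * ((∑ j, u j * x j : ℝ) : ℂ)) ∂q with hφqdef
  set Lp : ℂ := Complex.log φp with hLpdef
  set Lq : ℂ := Complex.log φq with hLqdef
  set B : ℝ := Real.exp (ε * ∑ j, |u j|) - 1 with hBdef
  -- difference of the two series
  have hd : HasSum (fun k : {k : Fin d → ℕ // 0 < ∑ j, k j} =>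
      (κp k.1 - κq k.1) * ∏ j, (Complex.I * (u j : ℂ)) ^ (k.1 j) / (Nat.factorial (k.1 j) : ℂ))
      (Lp - Lq) := by
    have := (hp u).sub (hq u)
    simpa only [sub_mul] using this
  -- the majorant series
  have hgfull : HasSum (fun k : Fin d → ℕ =>
      ∏ j, (ε * |u j|) ^ (k j) / (Nat.factorial (k j) : ℝ))
      (Real.exp (ε * ∑ j, |u j|)) := by
    have hj : ∀ j : Fin d, HasSum (fun n : ℕ => (ε * |u j|) ^ n / (Nat.factorial n : ℝ))
        (Real.exp (ε * |u j|)) := by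
      intro j
      rw [Real.exp_eq_exp_ℝ]
      exact NormedSpace.expSeries_div_hasSum_exp _
    have := myHasSumPi (fun j n => (ε * |u j|) ^ n / (Nat.factorial n : ℝ))
      (fun j => Real.exp (ε * |u j|)) (fun j n => by positivity) hj
    have hprod : (∏ j, Real.exp (ε * |u j|)) = Real.exp (ε * ∑ j, |u j|) := by
      rw [← Real.exp_sum, Finset.mul_sum]
    rwa [hprod] at this
  -- the majorant series over nonzero multi-indices
  have hgsub : HasSum (fun k : {k : Fin d → ℕ // 0 < ∑ j, k j} =>
      ∏ j, (ε * |u j|) ^ (k.1 j) / (Nat.factorial (k.1 j) : ℝ)) B := by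
    have hite := hasSum_ite_sub_hasSum hgfull (0 : Fin d → ℕ)
    have hg0 : (∏ j, (ε * |u j|) ^ ((0 : Fin d → ℕ) j) / (Nat.factorial ((0 : Fin d → ℕ) j) : ℝ))
        = 1 := by simp
    rw [hg0] at hite
    have hind : (Set.indicator {k : Fin d → ℕ | 0 < ∑ j, k j}
        (fun k : Fin d → ℕ => ∏ j, (ε * |u j|) ^ (k j) / (Nat.factorial (k j) : ℝ)))
        = fun k : Fin d → ℕ => if k = 0 then 0
            else ∏ j, (ε * |u j|) ^ (k j) / (Nat.factorial (k j) : ℝ) := by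
      funext k
      by_cases hk : 0 < ∑ j, k j
      · rw [Set.indicator_of_mem (show k ∈ {k : Fin d → ℕ | 0 < ∑ j, k j} from hk), if_neg]
        intro h0
        rw [h0] at hk
        simp at hk
      · rw [Set.indicator_of_notMem (show k ∉ {k : Fin d → ℕ | 0 < ∑ j, k j} from hk), if_pos]
        push_neg at hk
        have hz : ∑ j, k j = 0 := Nat.le_zero.mp hk
        funext j
        exact Finset.sum_eq_zero_iff.mp hz j (Finset.mem_univ j)
    have h2 : HasSum (Set.indicator {k : Fin d → ℕ | 0 < ∑ j, k j}
        (fun k : Fin d → ℕ => ∏ j, (ε * |u j|) ^ (k j) / (Nat.factorial (k j) : ℝ))) B := by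
      rw [hind]
      exact hite
    have h3 := (hasSum_subtype_iff_indicator
      (s := {k : Fin d → ℕ | 0 < ∑ j, k j})
      (f := fun k : Fin d → ℕ => ∏ j, (ε * |u j|) ^ (k j) / (Nat.factorial (k j) : ℝ))
      (a := B)).mpr h2
    exact h3
  -- termwise bound
  have hnormle : ∀ k : {k : Fin d → ℕ // 0 < ∑ j, k j},
      ‖(κp k.1 - κq k.1) * ∏ j, (Complex.I * (u j : ℂ)) ^ (k.1 j) /
        (Nat.factorial (k.1 j) : ℂ)‖
      ≤ ∏ j, (ε * |u j|) ^ (k.1 j) / (Nat.factorial (k.1 j) : ℝ) := by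
    intro k
    rw [myNormTerm]
    have h1 : ‖κp k.1 - κq k.1‖ * ∏ j, |u j| ^ (k.1 j) / (Nat.factorial (k.1 j) : ℝ)
        ≤ ε ^ (∑ j, k.1 j) * ∏ j, |u j| ^ (k.1 j) / (Nat.factorial (k.1 j) : ℝ) := by
      apply mul_le_mul_of_nonneg_right (hκ k.1 k.2)
      exact Finset.prod_nonneg fun j _ => by positivity
    refine h1.trans (le_of_eq ?_)
    rw [← Finset.prod_pow_eq_pow_sum, ← Finset.prod_mul_distrib]
    refine Finset.prod_congr rfl fun j _ => ?_
    rw [mul_pow, mul_div_assoc]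
  have hsumnorm : Summable (fun k : {k : Fin d → ℕ // 0 < ∑ j, k j} =>
      ‖(κp k.1 - κq k.1) * ∏ j, (Complex.I * (u j : ℂ)) ^ (k.1 j) /
        (Nat.factorial (k.1 j) : ℂ)‖) :=
    Summable.of_nonneg_of_le (fun _ => norm_nonneg _) hnormle hgsub.summable
  -- the bound on the logs
  have hB : ‖Lp - Lq‖ ≤ B := by
    calc ‖Lp - Lq‖
        = ‖∑' k : {k : Fin d → ℕ // 0 < ∑ j, k j},
            (κp k.1 - κq k.1) * ∏ j, (Complex.I * (u j : ℂ)) ^ (k.1 j) /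
              (Nat.factorial (k.1 j) : ℂ)‖ := by rw [hd.tsum_eq]
      _ ≤ ∑' k : {k : Fin d → ℕ // 0 < ∑ j, k j},
            ‖(κp k.1 - κq k.1) * ∏ j, (Complex.I * (u j : ℂ)) ^ (k.1 j) /
              (Nat.factorial (k.1 j) : ℂ)‖ := norm_tsum_le_tsum_norm hsumnorm
      _ ≤ ∑' k : {k : Fin d → ℕ // 0 < ∑ j, k j},
            ∏ j, (ε * |u j|) ^ (k.1 j) / (Nat.factorial (k.1 j) : ℝ) :=
          Summable.tsum_le_tsum hnormle hsumnorm hgsub.summable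
      _ = B := hgsub.tsum_eq
  have hBnonneg : 0 ≤ B := by
    rw [hBdef, sub_nonneg, ← Real.exp_zero]
    apply Real.exp_le_exp.mpr
    have : 0 ≤ ∑ j, |u j| := Finset.sum_nonneg fun j _ => abs_nonneg _
    positivity
  -- norm of φp is at most 1
  have hφp1 : ‖φp‖ ≤ 1 := by
    rw [hφpdef]
    calc ‖∫ x, Complex.exp (Complex.I * ((∑ j, u j * x j : ℝ) : ℂ)) ∂p‖
        ≤ ∫ x, ‖Complex.exp (Complex.I * ((∑ j, u j * x j : ℝ) : ℂ))‖ ∂p :=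
          norm_integral_le_integral_norm _
      _ = ∫ _x, (1 : ℝ) ∂p := by
          congr 1
          funext x
          exact myNormExpI _
      _ = 1 := by simp
  have hexp_p : φp = Complex.exp Lp := (Complex.exp_log hφp).symm
  have hexp_q : φq = Complex.exp Lq := (Complex.exp_log hφq).symm
  have hfactor : φp - φq = Complex.exp Lp * (1 - Complex.exp (Lq - Lp)) := by
    rw [mul_one_sub, ← Complex.exp_add, add_sub_cancel, ← hexp_p, ← hexp_q]
  have hbound2 : ‖1 - Complex.exp (Lq - Lp)‖ ≤ Real.exp B - 1 := by
    rw [norm_sub_rev]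
    refine (myNormExpSubOne _).trans ?_
    apply sub_le_sub_right
    apply Real.exp_le_exp.mpr
    rw [norm_sub_rev]
    exact hB
  have hmain : ‖φp - φq‖ ≤ Real.exp B - 1 := by
    rw [hfactor, norm_mul, ← hexp_p]
    calc ‖φp‖ * ‖1 - Complex.exp (Lq - Lp)‖
        ≤ 1 * (Real.exp B - 1) := by
          apply mul_le_mul hφp1 hbound2 (norm_nonneg _) zero_le_one
      _ = Real.exp B - 1 := one_mul _
  refine hmain.trans (le_max_left _ _)
end
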